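/- The total number of weakly increasing allowable RG-words of length n (summed over all values k = 1,…,n of the maximum letter) equals the Fibonacci number F_n, where F_0 = F_1 = 1 and F_n = F_{n−1} + F_{n−2}. -/

import Mathlib

open scoped Classical

/-- The prefix maximum `max(w_1, …, w_{i-1})` (equal to `0` when `i` is the first index). -/
def pmax {n k : ℕ} (w : Fin n → Fin (k + 1)) (i : Fin n) : ℕ :=
  (Finset.univ.filter fun j => j < i).sup fun j => (w j : ℕ)

/-- `w` is a restricted growth word of length `n` with maximum letter `k`. -/
def IsRG {n k : ℕ} (w : Fin n → Fin (k + 1)) : Prop :=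
  (∀ i, 1 ≤ (w i : ℕ)) ∧ (∀ i, (w i : ℕ) ≤ pmax w i + 1) ∧
    (Finset.univ.sup fun i => (w i : ℕ)) = k

/-- An RG-word is allowable if every even letter appears exactly once. -/
def IsAllowable {n k : ℕ} (w : Fin n → Fin (k + 1)) : Prop :=
  ∀ j : ℕ, Even j → (Finset.univ.filter fun i => (w i : ℕ) = j).card ≤ 1

/-- `a(n,k)`, the number of allowable RG-words of length `n` with maximum letter `k`. -/
noncomputable def aCount (n k : ℕ) : ℕ :=
  (Finset.univ.filter fun w : Fin n → Fin (k + 1) => IsRG w ∧ IsAllowable w).card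

/-- Fibonacci numbers with `F 0 = F 1 = 1`. -/
def Fb : ℕ → ℕ
  | 0 => 1
  | 1 => 1
  | n + 2 => Fb (n + 1) + Fb n


/-- step relation on the reversed word: `x` is a later letter, `y` the preceding one. -/
def SRel (x y : ℕ) : Prop := x = y + 1 ∨ (x = y ∧ Odd x)

/-- validity of a reversed word. -/
def ValidR (l : List ℕ) : Prop := l.Chain' SRel ∧ l.getLast? = some 1

/-- Finsets of valid reversed words of length `n`, with odd head (first component)
    resp. even head (second). -/
def AB : ℕ → Finset (List ℕ) × Finset (List ℕ)
  | 0 => (∅, ∅)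
  | 1 => ({[1]}, ∅)
  | n + 2 =>
    (((AB (n+1)).1.image fun l => l.head! :: l) ∪
      ((AB (n+1)).2.image fun l => (l.head! + 1) :: l),
     (AB (n+1)).1.image fun l => (l.head! + 1) :: l)

lemma validR_cons {x y : ℕ} {t : List ℕ} :
    ValidR (x :: y :: t) ↔ SRel x y ∧ ValidR (y :: t) := by
  unfold ValidR List.Chain'
  rw [List.isChain_cons_cons, List.getLast?_cons_cons]
  tauto

lemma mem_AB (n : ℕ) (l : List ℕ) :
    (l ∈ (AB n).1 ↔ l.length = n ∧ ValidR l ∧ Odd l.head!) ∧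
    (l ∈ (AB n).2 ↔ l.length = n ∧ ValidR l ∧ Even l.head!) := by
  induction n generalizing l with
  | zero =>
    constructor <;> simp only [AB, Finset.notMem_empty, false_iff] <;>
      rintro ⟨hl, ⟨_, hlast⟩, _⟩ <;> rw [List.length_eq_zero_iff] at hl <;> subst hl <;>
      simp at hlast
  | succ m ih =>
    match m with
    | 0 =>
      constructor
      · simp only [AB, Finset.mem_singleton]
        constructor
        · rintro rfl
          refine ⟨rfl, ⟨List.isChain_singleton _, rfl⟩, by norm_num⟩
        · rintro ⟨hl, ⟨_, hlast⟩, _⟩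
          match l, hl with
          | [x], _ => simp_all
      · simp only [AB, Finset.notMem_empty, false_iff]
        rintro ⟨hl, ⟨_, hlast⟩, hev⟩
        match l, hl with
        | [x], _ =>
          simp only [List.getLast?_singleton, Option.some.injEq] at hlast
          subst hlast
          simp [List.head!, Nat.even_iff] at hev
    | m + 1 =>
      have hlen1 : ∀ l' ∈ (AB (m+1)).1, l' ≠ ([] : List ℕ) := by
        intro l' hl'
        have := ((ih l').1.mp hl').1
        intro h; subst h; simp at this
      have hlen2 : ∀ l' ∈ (AB (m+1)).2, l' ≠ ([] : List ℕ) := by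
        intro l' hl'
        have := ((ih l').2.mp hl').1
        intro h; subst h; simp at this
      constructor
      · simp only [AB, Finset.mem_union, Finset.mem_image]
        constructor
        · rintro (⟨l', hl', rfl⟩ | ⟨l', hl', rfl⟩)
          · obtain ⟨hlen, hv, hodd⟩ := (ih l').1.mp hl'
            obtain ⟨y, t, rfl⟩ := List.exists_cons_of_ne_nil (hlen1 l' hl')
            simp only [List.head!] at hodd ⊢
            exact ⟨by simpa using hlen, validR_cons.mpr ⟨Or.inr ⟨rfl, hodd⟩, hv⟩, hodd⟩
          · obtain ⟨hlen, hv, hev⟩ := (ih l').2.mp hl'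
            obtain ⟨y, t, rfl⟩ := List.exists_cons_of_ne_nil (hlen2 l' hl')
            simp only [List.head!] at hev ⊢
            exact ⟨by simpa using hlen, validR_cons.mpr ⟨Or.inl rfl, hv⟩,
              Even.add_one hev⟩
        · rintro ⟨hl, hv, hodd⟩
          match l, hl with
          | x :: y :: t, hl =>
            simp only [List.head!] at hodd
            obtain ⟨hrel, hv'⟩ := validR_cons.mp hv
            have hlen' : (y :: t).length = m + 1 := by simpa using hl
            rcases hrel with h | ⟨h, _⟩
            · right
              refine ⟨y :: t, (ih _).2.mpr ⟨hlen', hv', ?_⟩, by simp [List.head!, h]⟩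
              subst h
              rw [Nat.odd_iff] at hodd
              rw [List.head!, Nat.even_iff]
              omega
            · left
              exact ⟨y :: t, (ih _).1.mpr ⟨hlen', hv', h ▸ hodd⟩, by simp [List.head!, h]⟩
      · simp only [AB, Finset.mem_image]
        constructor
        · rintro ⟨l', hl', rfl⟩
          obtain ⟨hlen, hv, hodd⟩ := (ih l').1.mp hl'
          obtain ⟨y, t, rfl⟩ := List.exists_cons_of_ne_nil (hlen1 l' hl')
          simp only [List.head!] at hodd ⊢
          exact ⟨by simpa using hlen, validR_cons.mpr ⟨Or.inl rfl, hv⟩, Odd.add_one hodd⟩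
        · rintro ⟨hl, hv, hev⟩
          match l, hl with
          | x :: y :: t, hl =>
            simp only [List.head!] at hev
            obtain ⟨hrel, hv'⟩ := validR_cons.mp hv
            have hlen' : (y :: t).length = m + 1 := by simpa using hl
            rcases hrel with h | ⟨h, hodd⟩
            · refine ⟨y :: t, (ih _).1.mpr ⟨hlen', hv', ?_⟩, by simp [List.head!, h]⟩
              subst h
              rw [Nat.even_iff] at hev
              rw [List.head!, Nat.odd_iff]
              omega
            · exact absurd hev (by simpa [Nat.odd_iff, Nat.even_iff] using hodd)

lemma validR_head {l : List ℕ} (hv : ValidR l) : 1 ≤ l.head! ∧ l.head! ≤ l.length := by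
  induction l with
  | nil => simpa [ValidR] using hv.2
  | cons x t ih =>
    match t with
    | [] =>
      obtain ⟨_, hlast⟩ := hv
      simp only [List.getLast?_singleton, Option.some.injEq] at hlast
      simp [List.head!, hlast]
    | y :: t' =>
      obtain ⟨hrel, hv'⟩ := validR_cons.mp hv
      have := ih hv'
      simp only [List.head!] at this ⊢
      rcases hrel with h | ⟨h, _⟩ <;> simp only [List.length_cons] at this ⊢ <;> omega

lemma cons_head_inj : Function.Injective (fun l : List ℕ => l.head! :: l) :=
  fun a b h => by simpa using congrArg List.tail h

lemma cons_head1_inj : Function.Injective (fun l : List ℕ => (l.head! + 1) :: l) :=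
  fun a b h => by simpa using congrArg List.tail h

lemma a_card (n : ℕ) :
    (AB (n+2)).1.card = (AB (n+1)).1.card + (AB (n+1)).2.card := by
  have hdisj : Disjoint ((AB (n+1)).1.image fun l => l.head! :: l)
      ((AB (n+1)).2.image fun l => (l.head! + 1) :: l) := by
    rw [Finset.disjoint_left]
    rintro z hz1 hz2
    simp only [Finset.mem_image] at hz1 hz2
    obtain ⟨l1, _, rfl⟩ := hz1
    obtain ⟨l2, _, h2⟩ := hz2
    have ht : l2 = l1 := by simpa using congrArg List.tail h2
    subst ht
    simp only [List.cons.injEq] at h2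
    omega
  show ((_ ∪ _ : Finset (List ℕ))).card = _
  rw [Finset.card_union_of_disjoint hdisj,
    Finset.card_image_of_injective _ cons_head_inj,
    Finset.card_image_of_injective _ cons_head1_inj]

lemma b_card (n : ℕ) : (AB (n+2)).2.card = (AB (n+1)).1.card := by
  show ((AB (n+1)).1.image fun l => (l.head! + 1) :: l).card = _
  rw [Finset.card_image_of_injective _ cons_head1_inj]

lemma ab_fib : ∀ n, (AB (n+1)).1.card + (AB (n+1)).2.card = Fb (n+1) ∧
    (AB (n+1)).1.card = Fb n := by
  intro n
  induction n with
  | zero => simp [AB, Fb]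
  | succ m ih =>
    obtain ⟨h1, h2⟩ := ih
    constructor
    · rw [a_card, b_card, Fb]
      omega
    · rw [a_card]
      exact h1
lemma pmax_zero {n k : ℕ} (w : Fin n → Fin (k + 1)) (i : Fin n) (h : i.val = 0) :
    pmax w i = 0 := by
  unfold pmax
  rw [show (Finset.univ.filter fun j => j < i) = ∅ by
    rw [Finset.filter_eq_empty_iff]
    intro j _
    simp [Fin.lt_def, h]]
  simp

lemma pmax_succ {n k : ℕ} {w : Fin n → Fin (k + 1)} (hm : Monotone w)
    (i : ℕ) (h : i + 1 < n) :
    pmax w ⟨i + 1, h⟩ = (w ⟨i, by omega⟩ : ℕ) := by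
  apply le_antisymm
  · apply Finset.sup_le
    intro j hj
    rw [Finset.mem_filter] at hj
    have : j ≤ (⟨i, by omega⟩ : Fin n) := by
      have := hj.2
      rw [Fin.lt_def] at this
      rw [Fin.le_def]
      simpa using Nat.lt_succ_iff.mp this
    exact hm this
  · exact Finset.le_sup (f := fun j => ((w j : ℕ)))
      (Finset.mem_filter.mpr ⟨Finset.mem_univ _, by simp [Fin.lt_def]⟩)

lemma sup_last {m k : ℕ} {w : Fin (m + 1) → Fin (k + 1)} (hm : Monotone w) :
    (Finset.univ.sup fun i => (w i : ℕ)) = (w (Fin.last m) : ℕ) := by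
  apply le_antisymm
  · exact Finset.sup_le fun i _ => hm (Fin.le_last i)
  · exact Finset.le_sup (f := fun i => ((w i : ℕ))) (Finset.mem_univ _)

lemma head!_eq_getElem {l : List ℕ} (h : l ≠ []) :
    l.head! = l[0]'(List.length_pos_iff.mpr h) := by
  match l with | a :: t => rfl


lemma validR_reverse_ofFn {m : ℕ} (f : Fin (m + 1) → ℕ) :
    ValidR (List.ofFn f).reverse ↔
      (∀ i (h : i + 1 < m + 1), SRel (f ⟨i + 1, h⟩) (f ⟨i, by omega⟩)) ∧ f 0 = 1 := by
  unfold ValidR List.Chain'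
  rw [List.isChain_reverse, List.getLast?_reverse, List.isChain_iff_getElem]
  constructor
  · rintro ⟨hc, h0⟩
    constructor
    · intro i h
      have := hc i (by simp only [List.length_ofFn]; omega)
      simp only [List.get_eq_getElem, List.getElem_ofFn] at this
      exact this
    · rw [List.ofFn_succ, List.head?_cons] at h0
      exact Option.some.inj h0
  · rintro ⟨hc, h0⟩
    constructor
    · intro i h
      simp only [List.length_ofFn] at h
      simp only [List.get_eq_getElem, List.getElem_ofFn]
      exact hc i (by omega)
    · rw [List.ofFn_succ, List.head?_cons, h0]

lemma head!_reverse_ofFn {m : ℕ} (f : Fin (m + 1) → ℕ) :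
    ((List.ofFn f).reverse).head! = f (Fin.last m) := by
  have hne : (List.ofFn f).reverse ≠ [] := by
    apply List.ne_nil_of_length_pos
    simp
  rw [head!_eq_getElem hne, List.getElem_reverse]
  simp only [List.getElem_ofFn, List.length_ofFn]
  congr 1

lemma count_eq (m k : ℕ) :
    (Finset.univ.filter fun w : Fin (m + 1) → Fin (k + 1) =>
      IsRG w ∧ IsAllowable w ∧ Monotone w).card
    = (((AB (m + 1)).1 ∪ (AB (m + 1)).2).filter fun l => l.head! = k).card := by
  apply Finset.card_bij (fun w _ => (List.ofFn fun j => ((w j : ℕ))).reverse)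
  · rintro w hw
    rw [Finset.mem_filter] at hw
    obtain ⟨-, hrg, hall, hmono⟩ := hw
    have f0 : (w 0 : ℕ) = 1 := by
      have h1 := hrg.1 0
      have h2 := hrg.2.1 0
      rw [pmax_zero w 0 rfl] at h2
      omega
    have hstep : ∀ i (h : i + 1 < m + 1),
        SRel ((w ⟨i + 1, h⟩ : ℕ)) ((w ⟨i, by omega⟩ : ℕ)) := by
      intro i h
      have h1 : (w ⟨i + 1, h⟩ : ℕ) ≤ (w ⟨i, by omega⟩ : ℕ) + 1 := by
        have := hrg.2.1 ⟨i + 1, h⟩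
        rwa [pmax_succ hmono i h] at this
      have h2 : (w ⟨i, by omega⟩ : ℕ) ≤ (w ⟨i + 1, h⟩ : ℕ) :=
        hmono (Fin.mk_le_mk.mpr (by omega))
      rcases eq_or_lt_of_le h2 with heq | hlt
      · right
        refine ⟨heq.symm, ?_⟩
        by_contra hodd
        rw [Nat.not_odd_iff_even] at hodd
        have hcard : 1 < (Finset.univ.filter
            fun i' => (w i' : ℕ) = (w ⟨i + 1, h⟩ : ℕ)).card := by
          apply Finset.one_lt_card.mpr
          refine ⟨⟨i, by omega⟩, ?_, ⟨i + 1, h⟩, ?_, ?_⟩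
          · simp only [Finset.mem_filter, Finset.mem_univ, true_and]
            exact heq
          · simp
          · simp [Fin.ext_iff]
        have := hall _ hodd
        omega
      · left
        omega
    have hlastk : (w (Fin.last m) : ℕ) = k := by
      rw [← sup_last hmono]
      exact hrg.2.2
    rw [Finset.mem_filter, Finset.mem_union, (mem_AB _ _).1, (mem_AB _ _).2]
    have hlen : ((List.ofFn fun j => ((w j : ℕ))).reverse).length = m + 1 := by simp
    have hv : ValidR (List.ofFn fun j => ((w j : ℕ))).reverse :=
      (validR_reverse_ofFn _).mpr ⟨hstep, f0⟩
    have hh : ((List.ofFn fun j => ((w j : ℕ))).reverse).head! = k := by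
      rw [head!_reverse_ofFn]
      exact hlastk
    rcases Nat.even_or_odd (((List.ofFn fun j => ((w j : ℕ))).reverse).head!) with he | ho
    · exact ⟨Or.inr ⟨hlen, hv, he⟩, hh⟩
    · exact ⟨Or.inl ⟨hlen, hv, ho⟩, hh⟩
  · intro w1 h1 w2 h2 heq
    have h3 := List.reverse_injective heq
    have h4 := List.ofFn_injective h3
    funext j
    exact Fin.val_injective (congrFun h4 j)
  · intro l hl
    rw [Finset.mem_filter] at hl
    obtain ⟨hmem, hhead⟩ := hl
    have hlv : l.length = m + 1 ∧ ValidR l := by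
      rcases Finset.mem_union.mp hmem with h | h
      · obtain ⟨h1, h2, -⟩ := (mem_AB _ l).1.mp h; exact ⟨h1, h2⟩
      · obtain ⟨h1, h2, -⟩ := (mem_AB _ l).2.mp h; exact ⟨h1, h2⟩
    obtain ⟨hlen, hval⟩ := hlv
    have hne : l ≠ [] := by intro h; subst h; simp at hlen
    have hrlen : l.reverse.length = m + 1 := by simp [hlen]
    set f : Fin (m + 1) → ℕ := fun j => l.reverse[j.val]'(by rw [hrlen]; exact j.isLt)
      with hf
    have f0 : f 0 = 1 := by
      have h0 : l.reverse.head? = some 1 := by rw [List.head?_reverse]; exact hval.2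
      rw [List.head?_eq_getElem?, List.getElem?_eq_getElem (by rw [hrlen]; omega)] at h0
      exact Option.some.inj h0
    have hstep : ∀ i (h : i + 1 < m + 1), SRel (f ⟨i + 1, h⟩) (f ⟨i, by omega⟩) := by
      intro i h
      have hchain : List.Chain' (flip SRel) l.reverse :=
        (List.isChain_reverse (l := l)).mpr hval.1
      have := List.isChain_iff_getElem.mp hchain i (by rw [hrlen]; omega)
      exact this
    have hmonof : ∀ (d i : ℕ) (h : i + d < m + 1) (h' : i < m + 1),
        f ⟨i, h'⟩ ≤ f ⟨i + d, h⟩ := by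
      intro d
      induction d with
      | zero => intro i h h'; exact le_refl _
      | succ d ih =>
        intro i h h'
        have h1 : i + d < m + 1 := by omega
        have h2 := ih i h1 h'
        have h3 : f ⟨i + d + 1, h⟩ = f ⟨i + d, h1⟩ + 1 ∨
            (f ⟨i + d + 1, h⟩ = f ⟨i + d, h1⟩ ∧ Odd (f ⟨i + d + 1, h⟩)) :=
          hstep (i + d) h
        show f ⟨i, h'⟩ ≤ f ⟨i + d + 1, h⟩
        rcases h3 with h3 | ⟨h3, -⟩ <;> omega
    have hmono' : ∀ a b : Fin (m + 1), a ≤ b → f a ≤ f b := by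
      intro a b hab
      have hle := Fin.le_def.mp hab
      calc f a = f ⟨a.val, a.isLt⟩ := rfl
        _ ≤ f ⟨a.val + (b.val - a.val), by omega⟩ := hmonof _ _ _ _
        _ = f b := by congr 1; exact Fin.ext (by simp only []; omega)
    have flast : f (Fin.last m) = k := by
      show l.reverse[(Fin.last m).val]'_ = k
      rw [List.getElem_reverse]
      rw [← hhead, head!_eq_getElem hne]
      congr 1
      simp only [Fin.last]
      omega
    have fk : ∀ j, f j ≤ k := by
      intro j
      rw [← flast]
      exact hmono' j (Fin.last m) (Fin.le_last j)
    refine ⟨fun j => ⟨f j, Nat.lt_succ_of_le (fk j)⟩, ?_, ?_⟩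
    · rw [Finset.mem_filter]
      set w : Fin (m + 1) → Fin (k + 1) := fun j => ⟨f j, Nat.lt_succ_of_le (fk j)⟩
        with hw
      have hmonow : Monotone w := fun a b hab => Fin.mk_le_mk.mpr (hmono' a b hab)
      refine ⟨Finset.mem_univ _, ⟨?_, ?_, ?_⟩, ?_, hmonow⟩
      · intro i
        show 1 ≤ f i
        rw [← f0]
        exact hmono' 0 i (Fin.zero_le i)
      · rintro ⟨iv, hiv⟩
        match iv, hiv with
        | 0, hiv =>
          rw [pmax_zero w _ rfl]
          show f ⟨0, hiv⟩ ≤ 0 + 1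
          have e : (⟨0, hiv⟩ : Fin (m + 1)) = 0 := Fin.ext (by simp)
          rw [e, f0]
        | j + 1, hiv =>
          rw [pmax_succ hmonow j hiv]
          show f ⟨j + 1, hiv⟩ ≤ f ⟨j, Nat.lt_of_succ_lt hiv⟩ + 1
          have h3 : f ⟨j + 1, hiv⟩ = f ⟨j, Nat.lt_of_succ_lt hiv⟩ + 1 ∨
              (f ⟨j + 1, hiv⟩ = f ⟨j, Nat.lt_of_succ_lt hiv⟩ ∧ Odd (f ⟨j + 1, hiv⟩)) :=
            hstep j hiv
          rcases h3 with h3 | ⟨h3, -⟩ <;> omega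
      · rw [sup_last hmonow]
        exact flast
      · -- IsAllowable
        intro v hv
        rw [Finset.card_le_one]
        intro a ha b hb
        simp only [Finset.mem_filter, Finset.mem_univ, true_and] at ha hb
        have key : ∀ (x y : Fin (m + 1)), x < y → (w x : ℕ) = v → (w y : ℕ) = v → False := by
          intro x y hxy hx hy
          have hxval := Fin.lt_def.mp hxy
          have hx1 : x.val + 1 < m + 1 := by have := y.isLt; omega
          have h3 := hstep x.val hx1
          simp only [Fin.eta] at h3
          have hfx : f x = v := hx
          have hfy : f y = v := hy
          have h1 : f x ≤ f ⟨x.val + 1, hx1⟩ := by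
            rcases h3 with h3 | ⟨h3, -⟩ <;> omega
          have h2 : f ⟨x.val + 1, hx1⟩ ≤ f y :=
            hmono' _ _ (by rw [Fin.le_def]; simp only []; omega)
          have heqv : f ⟨x.val + 1, hx1⟩ = v := le_antisymm (hfy ▸ h2) (hfx ▸ h1)
          rcases h3 with h3 | ⟨h3, hodd⟩
          · omega
          · rw [heqv] at hodd
            exact (Nat.not_odd_iff_even.symm.mp hv) hodd
        rcases lt_trichotomy a b with h | h | h
        · exact absurd (key a b h ha hb) (by simp)
        · exact h
        · exact absurd (key b a h hb ha) (by simp)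
    · show (List.ofFn fun j => ((f j : ℕ))).reverse = l
      have : (List.ofFn fun j => (f j : ℕ)) = l.reverse := by
        apply List.ext_getElem (by simp [hrlen])
        intro i h1 h2
        simp only [List.getElem_ofFn]
        rfl
      rw [this, List.reverse_reverse]

theorem total_unmatched_eq_fib (n : ℕ) (hn : 1 ≤ n) :
    (∑ k ∈ Finset.Icc 1 n,
        (Finset.univ.filter fun w : Fin n → Fin (k + 1) =>
          IsRG w ∧ IsAllowable w ∧ Monotone w).card) = Fb n := by
  obtain ⟨m, rfl⟩ : ∃ m, n = m + 1 := ⟨n - 1, by omega⟩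
  have memb : ∀ l ∈ (AB (m + 1)).1 ∪ (AB (m + 1)).2, l.head! ∈ Finset.Icc 1 (m + 1) := by
    intro l hl
    have hlv : l.length = m + 1 ∧ ValidR l := by
      rcases Finset.mem_union.mp hl with h | h
      · obtain ⟨h1, h2, -⟩ := (mem_AB _ l).1.mp h; exact ⟨h1, h2⟩
      · obtain ⟨h1, h2, -⟩ := (mem_AB _ l).2.mp h; exact ⟨h1, h2⟩
    have := validR_head hlv.2
    rw [Finset.mem_Icc]
    omega
  have hdisj : Disjoint (AB (m + 1)).1 (AB (m + 1)).2 := by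
    rw [Finset.disjoint_left]
    intro l h1 h2
    obtain ⟨-, -, ho⟩ := (mem_AB _ l).1.mp h1
    obtain ⟨-, -, he⟩ := (mem_AB _ l).2.mp h2
    exact (Nat.not_odd_iff_even.symm.mp he) ho
  calc (∑ k ∈ Finset.Icc 1 (m + 1),
        (Finset.univ.filter fun w : Fin (m + 1) → Fin (k + 1) =>
          IsRG w ∧ IsAllowable w ∧ Monotone w).card)
      = ∑ k ∈ Finset.Icc 1 (m + 1),
          (((AB (m + 1)).1 ∪ (AB (m + 1)).2).filter fun l => l.head! = k).card :=
        Finset.sum_congr rfl fun k _ => count_eq m k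
    _ = ((AB (m + 1)).1 ∪ (AB (m + 1)).2).card :=
        (Finset.card_eq_sum_card_fiberwise memb).symm
    _ = (AB (m + 1)).1.card + (AB (m + 1)).2.card := Finset.card_union_of_disjoint hdisj
    _ = Fb (m + 1) := (ab_fib m).1
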